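/- Let Q = {1, 2, 3} with the two totally symmetric quasigroup operations ·₁ (given by 1·₁1=1, 1·₁2=3, 1·₁3=2, 2·₁2=2, 2·₁3=1, 3·₁3=3) and ·₂ (given by 1·₂1=2, 1·₂2=1, 1·₂3=3, 2·₂2=3, 2·₂3=2, 3·₂3=1). Then the effect algebras E(Q, ·₁) and E(Q, ·₂) are not isomorphic, even though they have the same underlying set, the same partial order, and the same orthosupplementation. -/

import Mathlib

/-- An effect algebra: a set with a partially defined binary operation `oplus`
(modeled by `Option`), elements `zero` and `one`, satisfying commutativity,
associativity, unique orthosupplementation (`compl`) and the zero-unit law. -/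
structure EffectAlgebra (E : Type*) where
  oplus : E → E → Option E
  zero : E
  one : E
  comm : ∀ p q, oplus p q = oplus q p
  assoc : ∀ p q r s t, oplus q r = some s → oplus p s = some t →
    ∃ u, oplus p q = some u ∧ oplus u r = some t
  compl : E → E
  compl_def : ∀ p, oplus p (compl p) = some one
  compl_unique : ∀ p q, oplus p q = some one → q = compl p
  zero_unit : ∀ p, (oplus one p).isSome → p = zero

namespace EffectAlgebra

variable {E : Type*} (A : EffectAlgebra E)

/-- `p ≤ q` iff there is `r` with `p ⊕ r = q`. -/
def le (p q : E) : Prop := ∃ r, A.oplus p r = some q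

/-- `p ⊥ q` iff `p ⊕ q` is defined. -/
def Orth (p q : E) : Prop := (A.oplus p q).isSome

/-- `j` is the join (least upper bound) of `p` and `q`. -/
def IsJoin (p q j : E) : Prop :=
  A.le p j ∧ A.le q j ∧ ∀ u, A.le p u → A.le q u → A.le j u

/-- `m` is the meet (greatest lower bound) of `p` and `q`. -/
def IsMeet (p q m : E) : Prop :=
  A.le m p ∧ A.le m q ∧ ∀ t, A.le t p → A.le t q → A.le t m

/-- `x` is sharp iff `x ∧ x' = 0`. -/
def Sharp (x : E) : Prop := A.IsMeet x (A.compl x) A.zero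

/-- `x` is principal iff `p ⊥ q`, `p ≤ x`, `q ≤ x` imply `p ⊕ q ≤ x`. -/
def Principal (x : E) : Prop :=
  ∀ p q r, A.oplus p q = some r → A.le p x → A.le q x → A.le r x

end EffectAlgebra

/-- The underlying set `(Q × {0}) ∪ (Q × {1}) ∪ {0, 1}` of `E(Q,·)`:
`lo q` is `(q,0)`, `hi q` is `(q,1)`. -/
inductive EQCarrier (Q : Type*) where
  | zero : EQCarrier Q
  | one : EQCarrier Q
  | lo : Q → EQCarrier Q
  | hi : Q → EQCarrier Q

/-- The partial operation of `E(Q,·)`: `(q₁,0) ⊕ (q₂,0) = (q₁·q₂,1)`,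
`(q,0) ⊕ (q,1) = (q,1) ⊕ (q,0) = 1`, `0 ⊕ x = x ⊕ 0 = x`, undefined
otherwise. -/
def eqOplus {Q : Type*} [DecidableEq Q] (mul : Q → Q → Q) :
    EQCarrier Q → EQCarrier Q → Option (EQCarrier Q)
  | .zero, x => some x
  | x, .zero => some x
  | .lo a, .lo b => some (.hi (mul a b))
  | .lo a, .hi b => if a = b then some .one else none
  | .hi a, .lo b => if a = b then some .one else none
  | _, _ => none

/-- The first quasigroup operation on `{1,2,3}` (coded as `Fin 3`):
`1·1=1, 1·2=3, 1·3=2, 2·2=2, 2·3=1, 3·3=3`. -/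
def mul1 (a b : Fin 3) : Fin 3 := if a = b then a else -(a + b)

/-- The second quasigroup operation on `{1,2,3}` (coded as `Fin 3`):
`1·1=2, 1·2=1, 1·3=3, 2·2=3, 2·3=2, 3·3=1`. -/
def mul2 (a b : Fin 3) : Fin 3 := 1 - (a + b)

/-- The effect algebras `E(Q,·₁)` and `E(Q,·₂)` are not isomorphic. -/
theorem stmt_14 :
    ¬ ∃ φ : EQCarrier (Fin 3) → EQCarrier (Fin 3),
      Function.Bijective φ ∧
      (∀ a b, (eqOplus mul1 a b).isSome ↔ (eqOplus mul2 (φ a) (φ b)).isSome) ∧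
      φ .one = .one ∧
      (∀ a b c, eqOplus mul1 a b = some c →
        eqOplus mul2 (φ a) (φ b) = some (φ c)) := by
  rintro ⟨φ, -, -, hone, hhom⟩
  have h1 : eqOplus mul2 (φ (.lo 0)) (φ (.lo 0)) = some (φ (.hi 0)) :=
    hhom _ _ _ rfl
  have h2 : eqOplus mul2 (φ (.lo 0)) (φ (.hi 0)) = some .one := by
    have := hhom (.lo 0) (.hi 0) .one rfl
    rw [hone] at this; exact this
  rcases hu : φ (.lo 0) with _ | _ | a | a
  · rw [hu] at h1 h2
    simp only [eqOplus] at h1 h2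
    rw [← Option.some_inj.mp h1] at h2
    exact nomatch (Option.some_inj.mp h2)
  · rw [hu] at h1; simp [eqOplus] at h1
  · rw [hu] at h1 h2
    simp only [eqOplus] at h1
    rw [← Option.some_inj.mp h1] at h2
    simp only [eqOplus] at h2
    split at h2
    · next h => exact absurd h (by fin_cases a <;> decide)
    · exact nomatch h2
  · rw [hu] at h1; simp [eqOplus] at h1
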